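/- arXiv:1410.5788 — 2 statements merged into one kernel-verified Lean document; each statement's English description precedes it below -/
import Mathlib

section
/- The improper iterated integral ∫₀^∞ (sin u / u)·(∫₀^u sin(v)cos(v)/v dv) du equals the improper iterated integral ∫₀^∞ (cos(u)·sin(u)/u)·(∫_u^∞ sin(v)/v dv) du, where ∫_u^∞ sin(v)/v dv denotes lim_{B→∞} ∫_u^B sin(v)/v dv and each outer integral over (0, ∞) is understood as the improper limit lim_{T→∞} of the integral over (0, T]. -/
open Real Filter

open MeasureTheory Set intervalIntegral

noncomputable def gg : ℝ → ℝ := fun x => if x = 0 then 1 else Real.sin x / x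

lemma gg_cont : Continuous gg := by
  rw [continuous_iff_continuousAt]
  intro x
  rcases eq_or_ne x 0 with rfl | hx
  · have h1 : Tendsto (fun y : ℝ => Real.sin y / y) (nhdsWithin 0 {(0:ℝ)}ᶜ) (nhds 1) := by
      have h := (Real.hasDerivAt_sin 0)
      rw [hasDerivAt_iff_tendsto_slope] at h
      rw [Real.cos_zero] at h
      refine h.congr fun y => ?_
      simp [slope_def_field]
    have h2 : Tendsto gg (nhdsWithin 0 {(0:ℝ)}ᶜ) (nhds 1) := by
      refine h1.congr' ?_
      filter_upwards [self_mem_nhdsWithin] with y hy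
      simp [gg, if_neg (show y ≠ 0 from hy)]
    unfold ContinuousAt
    have hgg : gg 0 = 1 := by simp [gg]
    rw [hgg, ← nhdsNE_sup_pure]
    exact h2.sup (by simpa [hgg] using tendsto_pure_nhds gg 0)
  · have : ContinuousAt (fun y : ℝ => Real.sin y / y) x :=
      (Real.continuous_sin.continuousAt).div continuousAt_id hx
    refine this.congr ?_
    filter_upwards [isOpen_compl_singleton.mem_nhds hx] with y hy
    simp [gg, if_neg (show y ≠ 0 from hy)]

lemma gg_eq {x : ℝ} (hx : x ≠ 0) : gg x = Real.sin x / x := by simp [gg, hx]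

lemma integral_congr_g (f f' : ℝ → ℝ) (h : ∀ x ≠ (0:ℝ), f x = f' x) (a b : ℝ) :
    ∫ v in a..b, f v = ∫ v in a..b, f' v := by
  apply intervalIntegral.integral_congr_ae
  have h0 : (volume : Measure ℝ) {0} = 0 := Real.volume_singleton
  filter_upwards [measure_eq_zero_iff_ae_notMem.mp h0] with x hx _
  exact h x hx

lemma tail_lemma (ψ Ψ : ℝ → ℝ) (hψ : Continuous ψ) (hΨ : ∀ x, HasDerivAt Ψ (ψ x) x)
    (M : ℝ) (hM : ∀ x, |Ψ x| ≤ M) {u : ℝ} (hu : 0 < u) :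
    ∃ l, Tendsto (fun B => ∫ v in u..B, ψ v / v) atTop (nhds l) ∧ |l| ≤ 2 * M / u := by
  have hΨc : Continuous Ψ := continuous_iff_continuousAt.mpr fun x => (hΨ x).continuousAt
  -- the remainder integrand
  set r : ℝ → ℝ := fun v => (v ^ 2)⁻¹ * Ψ v with hr
  have hrc : ContinuousOn r (Ioi u) := by
    apply ContinuousOn.mul ?_ hΨc.continuousOn
    exact ContinuousOn.inv₀ (by fun_prop) (fun x hx => pow_ne_zero _ (ne_of_gt (hu.trans hx)))
  have hbound : ∀ v ∈ Ioi u, ‖r v‖ ≤ M * v ^ (-2 : ℝ) := by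
    intro v hv
    have hv0 : 0 < v := hu.trans hv
    have : v ^ (-2 : ℝ) = (v ^ 2)⁻¹ := by
      rw [Real.rpow_neg hv0.le, Real.rpow_two]
    rw [this, hr]
    simp only [norm_mul, norm_inv, Real.norm_eq_abs]
    rw [abs_of_pos (pow_pos hv0 2)]
    rw [mul_comm M]
    exact mul_le_mul_of_nonneg_left (by simpa using hM v) (by positivity)
  have hint2 : IntegrableOn (fun v : ℝ => M * v ^ (-2 : ℝ)) (Ioi u) := by
    exact (integrableOn_Ioi_rpow_of_lt (by norm_num) hu).const_mul M
  have hrint : IntegrableOn r (Ioi u) := by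
    refine Integrable.mono' hint2 (hrc.aestronglyMeasurable measurableSet_Ioi) ?_
    filter_upwards [ae_restrict_mem measurableSet_Ioi] with v hv using hbound v hv
  -- value of the comparison integral
  have hval : ∫ v in Ioi u, M * v ^ (-2 : ℝ) = M * u⁻¹ := by
    rw [MeasureTheory.integral_const_mul, integral_Ioi_rpow_of_lt (by norm_num) hu,
      show (-2:ℝ)+1 = -1 by norm_num, Real.rpow_neg_one]
    field_simp
  -- IBP identity, for B ≥ u
  have key : ∀ B, u ≤ B → ∫ v in u..B, ψ v / v =
      B⁻¹ * Ψ B - u⁻¹ * Ψ u + ∫ v in u..B, r v := by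
    intro B hB
    have hpos : ∀ x ∈ uIcc u B, x ≠ 0 := by
      intro x hx
      rw [uIcc_of_le hB] at hx
      exact ne_of_gt (lt_of_lt_of_le hu hx.1)
    have h1 : ∀ x ∈ uIcc u B, HasDerivAt (fun v : ℝ => v⁻¹) (-((x:ℝ) ^ 2)⁻¹) x :=
      fun x hx => hasDerivAt_inv (hpos x hx)
    have h2 : ∀ x ∈ uIcc u B, HasDerivAt Ψ (ψ x) x := fun x _ => hΨ x
    have hi1 : IntervalIntegrable (fun x : ℝ => -((x:ℝ) ^ 2)⁻¹) volume u B := by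
      apply ContinuousOn.intervalIntegrable
      exact (ContinuousOn.inv₀ (by fun_prop) (fun x hx => pow_ne_zero _ (hpos x hx))).neg
    have hi2 : IntervalIntegrable ψ volume u B := hψ.intervalIntegrable u B
    have := intervalIntegral.integral_mul_deriv_eq_deriv_mul h1 h2 hi1 hi2
    have heq : ∀ᵐ x, x ∈ Set.uIoc u B → ψ x / x = x⁻¹ * ψ x := by
      filter_upwards with x _
      rw [div_eq_inv_mul]
    rw [intervalIntegral.integral_congr_ae heq, this]
    have : ∫ x in u..B, -((x:ℝ)^2)⁻¹ * Ψ x = -∫ v in u..B, r v := by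
      rw [← intervalIntegral.integral_neg]
      apply intervalIntegral.integral_congr
      intro x _
      simp [hr]
    rw [this]
    ring
  -- limit pieces
  have t1 : Tendsto (fun B : ℝ => B⁻¹ * Ψ B) atTop (nhds 0) := by
    apply squeeze_zero_norm' (a := fun B : ℝ => M * B⁻¹) ?_ ?_
    · filter_upwards [eventually_gt_atTop 0] with B hB
      rw [norm_mul, Real.norm_eq_abs, Real.norm_eq_abs, abs_of_pos (inv_pos.mpr hB), mul_comm]
      exact mul_le_mul_of_nonneg_right (hM B) (by positivity)
    · simpa using tendsto_inv_atTop_zero.const_mul M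
  have t2 : Tendsto (fun B : ℝ => ∫ v in u..B, r v) atTop (nhds (∫ v in Ioi u, r v)) :=
    intervalIntegral_tendsto_integral_Ioi u hrint tendsto_id
  refine ⟨-(u⁻¹ * Ψ u) + ∫ v in Ioi u, r v, ?_, ?_⟩
  · have h3 : Tendsto (fun B : ℝ => B⁻¹ * Ψ B - u⁻¹ * Ψ u + ∫ v in u..B, r v) atTop
        (nhds ((0 : ℝ) - u⁻¹ * Ψ u + ∫ v in Ioi u, r v)) :=
      (t1.sub (tendsto_const_nhds : Tendsto (fun _ : ℝ => u⁻¹ * Ψ u) atTop _)).add t2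
    rw [show (0:ℝ) - u⁻¹ * Ψ u + ∫ v in Ioi u, r v = -(u⁻¹ * Ψ u) + ∫ v in Ioi u, r v by ring] at h3
    refine h3.congr' ?_
    filter_upwards [eventually_ge_atTop u] with B hB
    rw [key B hB]
  · have hb1 : |∫ v in Ioi u, r v| ≤ M * u⁻¹ := by
      rw [← Real.norm_eq_abs, ← hval]
      refine MeasureTheory.norm_integral_le_of_norm_le hint2 ?_
      filter_upwards [ae_restrict_mem measurableSet_Ioi] with v hv using hbound v hv
    have hb2 : |-(u⁻¹ * Ψ u)| ≤ M * u⁻¹ := by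
      rw [abs_neg, abs_mul, abs_of_pos (inv_pos.mpr hu), mul_comm]
      exact mul_le_mul_of_nonneg_right (hM u) (by positivity)
    calc |-(u⁻¹ * Ψ u) + ∫ v in Ioi u, r v| ≤ |-(u⁻¹ * Ψ u)| + |∫ v in Ioi u, r v| := abs_add_le _ _
      _ ≤ M * u⁻¹ + M * u⁻¹ := add_le_add hb2 hb1
      _ = 2 * M / u := by ring


/-- `∫₀^∞ (sin u / u)·(∫₀^u sin v cos v / v dv) du
= ∫₀^∞ (cos u · sin u / u)·(∫_u^∞ sin v / v dv) du`, where the tail integral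
`∫_u^∞ sin v / v dv` is `lim_{B→∞} ∫_u^B sin v / v dv` and the outer improper
integrals are limits of `∫₀^T` as `T → ∞`; both exist and are equal. -/
theorem iterated_integrals_eq :
    ∃ S : ℝ → ℝ,
      (∀ u : ℝ,
        Tendsto (fun B : ℝ => ∫ v in u..B, Real.sin v / v) atTop (nhds (S u))) ∧
      ∃ L : ℝ,
        Tendsto
          (fun T : ℝ => ∫ u in (0:ℝ)..T,
            (Real.sin u / u) * ∫ v in (0:ℝ)..u, Real.sin v * Real.cos v / v)
          atTop (nhds L) ∧
        Tendsto
          (fun T : ℝ => ∫ u in (0:ℝ)..T, (Real.cos u * Real.sin u / u) * S u)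
          atTop (nhds L) := by
  have hsinD : ∀ x : ℝ, HasDerivAt (fun y => -Real.cos y) (Real.sin x) x := fun x => by
    have := (Real.hasDerivAt_cos x).neg; rwa [neg_neg] at this
  have hM1 : ∀ x : ℝ, |(fun y : ℝ => -Real.cos y) x| ≤ 1 := fun x => by
    simpa [abs_neg] using Real.abs_cos_le_one x
  obtain ⟨c, hc, -⟩ := tail_lemma Real.sin (fun y => -Real.cos y) Real.continuous_sin hsinD
    1 hM1 one_pos
  set S : ℝ → ℝ := fun u => (∫ v in u..(1:ℝ), gg v) + c with hSdef
  have hgint : ∀ a b : ℝ, IntervalIntegrable gg volume a b :=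
    fun a b => gg_cont.intervalIntegrable a b
  have hsin_eq : ∀ a b : ℝ, (∫ v in a..b, Real.sin v / v) = ∫ v in a..b, gg v :=
    fun a b => integral_congr_g _ _ (fun x hx => (gg_eq hx).symm) a b
  have hgcv : Tendsto (fun B : ℝ => ∫ v in (1:ℝ)..B, gg v) atTop (nhds c) :=
    hc.congr fun B => hsin_eq 1 B
  have hScv : ∀ u : ℝ, Tendsto (fun B : ℝ => ∫ v in u..B, Real.sin v / v) atTop (nhds (S u)) := by
    intro u
    have h1 : Tendsto (fun B : ℝ => (∫ v in u..(1:ℝ), gg v) + ∫ v in (1:ℝ)..B, gg v)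
        atTop (nhds (S u)) := hgcv.const_add _
    refine h1.congr fun B => ?_
    rw [intervalIntegral.integral_add_adjacent_intervals (hgint u 1) (hgint 1 B), hsin_eq]
  refine ⟨S, hScv, ?_⟩
  -- S tends to 0 at infinity
  have hS0 : Tendsto S atTop (nhds 0) := by
    have h1 : Tendsto (fun T : ℝ => -(∫ v in (1:ℝ)..T, gg v) + c) atTop (nhds (-c + c)) :=
      (hgcv.neg).add_const c
    rw [neg_add_cancel] at h1
    refine h1.congr fun T => ?_
    rw [hSdef]
    simp [intervalIntegral.integral_symm 1 T]
  -- bound on S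
  have hSbd : ∀ u : ℝ, 0 < u → |S u| ≤ 2 / u := by
    intro u hu
    obtain ⟨l, hl, hlb⟩ := tail_lemma Real.sin (fun y => -Real.cos y) Real.continuous_sin hsinD
      1 hM1 hu
    rw [tendsto_nhds_unique (hScv u) hl]
    simpa using hlb
  -- FTC primitives
  have hprim : ∀ (f : ℝ → ℝ), Continuous f → ∀ a x : ℝ,
      HasDerivAt (fun t => ∫ v in a..t, f v) (f x) x := by
    intro f hf a x
    exact intervalIntegral.integral_hasDerivAt_right (hf.intervalIntegrable a x)
      (hf.stronglyMeasurableAtFilter _ _) hf.continuousAt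
  have hSderiv : ∀ x : ℝ, HasDerivAt S (-(gg x)) x := by
    intro x
    have h1 : S = fun t => -(∫ v in (1:ℝ)..t, gg v) + c := by
      funext t
      rw [hSdef]
      simp [intervalIntegral.integral_symm 1 t]
    rw [h1]
    simpa using ((hprim gg gg_cont 1 x).neg).add_const c
  have hScont : Continuous S :=
    continuous_iff_continuousAt.mpr fun x => (hSderiv x).continuousAt
  -- the function F
  set gcos : ℝ → ℝ := fun v => gg v * Real.cos v with hgcosdef
  have hgcosc : Continuous gcos := gg_cont.mul Real.continuous_cos
  set F : ℝ → ℝ := fun t => ∫ v in (0:ℝ)..t, gcos v with hFdef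
  have hFderiv : ∀ x : ℝ, HasDerivAt F (gcos x) x := hprim gcos hgcosc 0
  have hsc_eq : ∀ a b : ℝ, (∫ v in a..b, Real.sin v * Real.cos v / v) = ∫ v in a..b, gcos v := by
    intro a b
    refine integral_congr_g _ _ (fun x hx => ?_) a b
    show Real.sin x * Real.cos x / x = gg x * Real.cos x
    rw [gg_eq hx]
    ring
  -- convergence of F at infinity
  have hsc : ∀ x : ℝ, HasDerivAt (fun y => Real.sin y ^ 2 / 2) (Real.sin x * Real.cos x) x := by
    intro x
    have h := ((Real.hasDerivAt_sin x).pow 2).div_const 2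
    refine h.congr_deriv ?_
    ring
  obtain ⟨lF, hlF, -⟩ := tail_lemma (fun v => Real.sin v * Real.cos v)
    (fun y => Real.sin y ^ 2 / 2) (Real.continuous_sin.mul Real.continuous_cos) hsc
    (1/2) (fun x => by
      have h1 : |Real.sin x ^ 2| ≤ 1 := by
        rw [abs_of_nonneg (sq_nonneg _)]
        exact Real.sin_sq_le_one x
      calc |(fun y : ℝ => Real.sin y ^ 2 / 2) x| = |Real.sin x ^ 2| / 2 := by
            rw [abs_div]; norm_num
        _ ≤ 1 / 2 := by linarith) one_pos
  have hFcv : Tendsto F atTop (nhds ((∫ v in (0:ℝ)..(1:ℝ), gcos v) + lF)) := by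
    have h2 : Tendsto (fun B : ℝ => ∫ v in (1:ℝ)..B, gcos v) atTop (nhds lF) :=
      hlF.congr fun B => hsc_eq 1 B
    have h3 := h2.const_add (∫ v in (0:ℝ)..(1:ℝ), gcos v)
    refine h3.congr fun B => ?_
    rw [hFdef]
    exact intervalIntegral.integral_add_adjacent_intervals
      (hgcosc.intervalIntegrable _ _) (hgcosc.intervalIntegrable _ _)
  -- the integrand of the second outer integral
  set h : ℝ → ℝ := fun v => gcos v * S v with hhdef
  have hhc : Continuous h := hgcosc.mul hScont
  have hhint : IntegrableOn h (Ioi 1) := by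
    refine Integrable.mono' ((integrableOn_Ioi_rpow_of_lt
      (show (-2:ℝ) < -1 by norm_num) one_pos).const_mul 2)
      (hhc.aestronglyMeasurable.restrict) ?_
    filter_upwards [ae_restrict_mem measurableSet_Ioi] with v hv
    have hv1 : 1 < v := hv
    have hv0 : 0 < v := lt_trans one_pos hv1
    have e1 : (2:ℝ) * v ^ (-2:ℝ) = v⁻¹ * (2 / v) := by
      rw [Real.rpow_neg hv0.le, Real.rpow_two]
      field_simp
    show ‖gg v * Real.cos v * S v‖ ≤ 2 * v ^ (-2:ℝ)
    rw [e1]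
    have b1 : |gg v| ≤ v⁻¹ := by
      rw [gg_eq (ne_of_gt hv0), abs_div, abs_of_pos hv0, div_le_iff₀ hv0, inv_mul_cancel₀ (ne_of_gt hv0)]
      exact Real.abs_sin_le_one v
    have b2 : |Real.cos v| ≤ 1 := Real.abs_cos_le_one v
    have b3 : |S v| ≤ 2 / v := hSbd v hv0
    calc ‖gg v * Real.cos v * S v‖ = |gg v| * |Real.cos v| * |S v| := by
          rw [Real.norm_eq_abs, abs_mul, abs_mul]
      _ ≤ v⁻¹ * 1 * (2 / v) := by
          apply mul_le_mul (mul_le_mul b1 b2 (abs_nonneg _) (by positivity)) b3 (abs_nonneg _)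
          positivity
      _ = v⁻¹ * (2 / v) := by ring
  set L : ℝ := (∫ v in (0:ℝ)..(1:ℝ), h v) + ∫ v in Ioi 1, h v with hLdef
  have hBcv : Tendsto (fun T : ℝ => ∫ u in (0:ℝ)..T, h u) atTop (nhds L) := by
    have h1 := (intervalIntegral_tendsto_integral_Ioi 1 hhint tendsto_id).const_add
      (∫ v in (0:ℝ)..(1:ℝ), h v)
    refine h1.congr fun T => ?_
    exact intervalIntegral.integral_add_adjacent_intervals
      (hhc.intervalIntegrable _ _) (hhc.intervalIntegrable _ _)
  refine ⟨L, ?_, ?_⟩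
  · -- first outer integral
    have key : ∀ T : ℝ,
        (∫ u in (0:ℝ)..T, (Real.sin u / u) * ∫ v in (0:ℝ)..u, Real.sin v * Real.cos v / v)
          = (∫ u in (0:ℝ)..T, h u) - S T * F T := by
      intro T
      have hIBP := intervalIntegral.integral_mul_deriv_eq_deriv_mul
        (u := S) (u' := fun x => -(gg x)) (v := F) (v' := gcos)
        (fun x _ => hSderiv x) (fun x _ => hFderiv x)
        ((gg_cont.neg).intervalIntegrable 0 T) (hgcosc.intervalIntegrable 0 T)
      have hFz : F 0 = 0 := intervalIntegral.integral_same
      have e1 : (∫ u in (0:ℝ)..T, (Real.sin u / u) * ∫ v in (0:ℝ)..u, Real.sin v * Real.cos v / v)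
          = ∫ u in (0:ℝ)..T, gg u * F u := by
        refine integral_congr_g _ _ (fun x hx => ?_) 0 T
        rw [gg_eq hx, hsc_eq, hFdef]
      have e2 : (∫ u in (0:ℝ)..T, h u) = ∫ x in (0:ℝ)..T, S x * gcos x := by
        refine intervalIntegral.integral_congr fun x _ => ?_
        rw [hhdef]
        ring
      have e3 : (∫ x in (0:ℝ)..T, -(gg x) * F x) = -∫ x in (0:ℝ)..T, gg x * F x := by
        rw [← intervalIntegral.integral_neg]
        refine intervalIntegral.integral_congr fun x _ => ?_
        ring
      rw [e1, e2, hIBP, hFz, e3]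
      ring
    have h4 := hBcv.sub (hS0.mul hFcv)
    rw [zero_mul, sub_zero] at h4
    exact h4.congr fun T => (key T).symm
  · -- second outer integral
    refine hBcv.congr fun T => ?_
    refine integral_congr_g _ _ (fun x hx => ?_) 0 T
    show gg x * Real.cos x * S x = (Real.cos x * Real.sin x / x) * S x
    rw [gg_eq hx]
    ring
end

section
/- The improper integral ∫₀^∞ (cos u / u)·(∫₀^u sin²(v)/v dv) du converges; that is, the limit as T → ∞ of ∫₀^T (cos u / u)·(∫₀^u sin²(v)/v dv) du exists and is finite. -/
open Real Filter MeasureTheory Set intervalIntegral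

noncomputable def Fct (u : ℝ) : ℝ := ∫ v in (0:ℝ)..u, Real.sin v ^ 2 / v

lemma hfun_meas : Measurable (fun v : ℝ => Real.sin v ^ 2 / v) :=
  (Real.measurable_sin.pow_const 2).div measurable_id

lemma hfun_bound (v : ℝ) : |Real.sin v ^ 2 / v| ≤ |v| := by
  rcases eq_or_ne v 0 with rfl | hv
  · simp
  · rw [abs_div, div_le_iff₀ (abs_pos.2 hv)]
    have h1 : Real.sin v ^ 2 ≤ v ^ 2 := Real.sin_sq_le_sq
    have h2 : (0:ℝ) ≤ Real.sin v ^ 2 := sq_nonneg _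
    rw [abs_of_nonneg h2]
    nlinarith [sq_abs v]

lemma hfun_int (a b : ℝ) : IntervalIntegrable (fun v : ℝ => Real.sin v ^ 2 / v) volume a b := by
  apply (continuous_id.intervalIntegrable a b).mono_fun hfun_meas.aestronglyMeasurable
  exact Eventually.of_forall fun v => by
    have := hfun_bound v
    simp only [norm_eq_abs, id_eq]
    exact this

lemma Fct_cont : Continuous Fct := intervalIntegral.continuous_primitive hfun_int 0

lemma Fct_nonneg {u : ℝ} (hu : 0 ≤ u) : 0 ≤ Fct u := by
  apply intervalIntegral.integral_nonneg hu
  intro v hv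
  exact div_nonneg (sq_nonneg _) hv.1

lemma Fct_le_sq {u : ℝ} (hu : 0 ≤ u) : Fct u ≤ u ^ 2 / 2 := by
  have : Fct u ≤ ∫ v in (0:ℝ)..u, v := by
    apply intervalIntegral.integral_mono_on hu (hfun_int 0 u)
      (continuous_id.intervalIntegrable 0 u)
    intro v hv
    rcases eq_or_lt_of_le hv.1 with rfl | hv0
    · simp
    · rw [div_le_iff₀ hv0]
      have := Real.sin_sq_le_sq (x := v)
      simp only [id_eq]
      nlinarith
  simpa [integral_id] using this

lemma Fct_le_log {u : ℝ} (hu : 1 ≤ u) : Fct u ≤ 1 / 2 + Real.log u := by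
  have hsplit : Fct 1 + (∫ v in (1:ℝ)..u, Real.sin v ^ 2 / v) = Fct u :=
    intervalIntegral.integral_add_adjacent_intervals (hfun_int 0 1) (hfun_int 1 u)
  have h1 : Fct 1 ≤ 1 / 2 := by simpa using Fct_le_sq (zero_le_one)
  have h2 : (∫ v in (1:ℝ)..u, Real.sin v ^ 2 / v) ≤ ∫ v in (1:ℝ)..u, v⁻¹ := by
    apply intervalIntegral.integral_mono_on hu (hfun_int 1 u)
    · apply ContinuousOn.intervalIntegrable
      apply ContinuousOn.inv₀ continuousOn_id
      intro x hx
      rw [uIcc_of_le hu] at hx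
      exact (lt_of_lt_of_le one_pos hx.1).ne'
    · intro v hv
      have hv1 : (1:ℝ) ≤ v := hv.1
      have hv0 : (0:ℝ) < v := lt_of_lt_of_le one_pos hv1
      rw [div_le_iff₀ hv0]
      have := Real.sin_sq_le_one (x := v)
      calc Real.sin v ^ 2 ≤ 1 := Real.sin_sq_le_one v
        _ = v⁻¹ * v := by field_simp
  have h3 : (∫ v in (1:ℝ)..u, v⁻¹) = Real.log u := by
    rw [integral_inv]
    · simp
    · rw [uIcc_of_le hu]
      intro h
      exact absurd h.1 (by norm_num)
  linarith [hsplit]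

lemma Fct_hasDeriv {u : ℝ} (hu : 0 < u) :
    HasDerivAt Fct (Real.sin u ^ 2 / u) u := by
  apply intervalIntegral.integral_hasDerivAt_right (hfun_int 0 u)
    (hfun_meas.stronglyMeasurable.stronglyMeasurableAtFilter)
  exact ((Real.continuous_sin.pow 2).continuousAt).div continuousAt_id hu.ne'

noncomputable def Gct (u : ℝ) : ℝ := Fct u / u

noncomputable def Gct' (u : ℝ) : ℝ := Real.sin u ^ 2 / u ^ 2 - Fct u / u ^ 2

lemma Gct_hasDeriv {u : ℝ} (hu : 0 < u) : HasDerivAt Gct (Gct' u) u := by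
  have h := (Fct_hasDeriv hu).div (hasDerivAt_id u) hu.ne'
  refine h.congr_deriv ?_
  unfold Gct'
  simp only [id_eq, mul_one]
  field_simp

lemma Gct'_contOn : ContinuousOn Gct' (Ioi 0) := by
  have h1 : ContinuousOn (fun u : ℝ => Real.sin u ^ 2 / u ^ 2) (Ioi 0) := by
    apply ContinuousOn.div ((Real.continuous_sin.pow 2).continuousOn)
      ((continuous_pow 2).continuousOn)
    intro x hx
    have : (0:ℝ) < x := hx
    positivity
  have h2 : ContinuousOn (fun u : ℝ => Fct u / u ^ 2) (Ioi 0) := by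
    apply ContinuousOn.div Fct_cont.continuousOn ((continuous_pow 2).continuousOn)
    intro x hx
    have : (0:ℝ) < x := hx
    positivity
  exact h1.sub h2

lemma Gct'_bound {x : ℝ} (hx : 1 ≤ x) : |Gct' x| ≤ 4 * (x * Real.sqrt x)⁻¹ := by
  have hx0 : (0:ℝ) < x := lt_of_lt_of_le one_pos hx
  have hs : (1:ℝ) ≤ Real.sqrt x := by
    rw [show (1:ℝ) = Real.sqrt 1 by simp]
    exact Real.sqrt_le_sqrt hx
  have hs0 : (0:ℝ) < Real.sqrt x := lt_of_lt_of_le one_pos hs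
  have hxs : x = Real.sqrt x ^ 2 := (Real.sq_sqrt hx0.le).symm
  have hlog : Real.log x ≤ 2 * Real.sqrt x := by
    have h1 : Real.log (Real.sqrt x) ≤ Real.sqrt x - 1 := Real.log_le_sub_one_of_pos hs0
    have h2 : Real.log (Real.sqrt x) = Real.log x / 2 := Real.log_sqrt hx0.le
    linarith
  have hF : Fct x ≤ 1 / 2 + Real.log x := Fct_le_log hx
  have hF0 : 0 ≤ Fct x := Fct_nonneg hx0.le
  have hsin : Real.sin x ^ 2 ≤ 1 := Real.sin_sq_le_one x
  have habs : |Gct' x| ≤ (3 / 2 + 2 * Real.sqrt x) / x ^ 2 := by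
    unfold Gct'
    have hb : |Real.sin x ^ 2 / x ^ 2 - Fct x / x ^ 2|
        ≤ Real.sin x ^ 2 / x ^ 2 + Fct x / x ^ 2 := by
      have h1 : (0:ℝ) ≤ Real.sin x ^ 2 / x ^ 2 := by positivity
      have h2 : (0:ℝ) ≤ Fct x / x ^ 2 := by positivity
      rw [abs_sub_le_iff]
      constructor <;> linarith
    refine hb.trans ?_
    rw [← add_div, div_le_div_iff₀ (by positivity) (by positivity)]
    nlinarith
  refine habs.trans ?_
  rw [div_le_iff₀ (by positivity), mul_inv_rev]
  have key : (3 / 2 + 2 * Real.sqrt x) * (x * Real.sqrt x) ≤ 4 * x ^ 2 := by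
    have h4 : Real.sqrt x ^ 3 ≤ Real.sqrt x ^ 4 :=
      pow_le_pow_right₀ hs (by norm_num)
    nlinarith [h4, hxs, sq_nonneg (Real.sqrt x), hs0.le]
  calc (3 / 2 + 2 * Real.sqrt x)
      = ((3 / 2 + 2 * Real.sqrt x) * (x * Real.sqrt x)) / (x * Real.sqrt x) := by
        field_simp
    _ ≤ (4 * x ^ 2) / (x * Real.sqrt x) := by
        apply div_le_div_of_nonneg_right key (by positivity) |>.trans_eq rfl
    _ = 4 * ((Real.sqrt x)⁻¹ * x⁻¹) * x ^ 2 := by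
        field_simp

lemma phi_integrableOn :
    IntegrableOn (fun x : ℝ => Gct' x * Real.sin x) (Ioi 1) := by
  have hmeas : AEStronglyMeasurable (fun x : ℝ => Gct' x * Real.sin x)
      (volume.restrict (Ioi 1)) := by
    apply ContinuousOn.aestronglyMeasurable _ measurableSet_Ioi
    exact (Gct'_contOn.mono fun x hx => mem_Ioi.2 (lt_trans one_pos hx)).mul
      Real.continuous_sin.continuousOn
  have hbint : IntegrableOn (fun x : ℝ => 4 * (x * Real.sqrt x)⁻¹) (Ioi 1) := by
    have h0 : IntegrableOn (fun x : ℝ => x ^ (-(3/2) : ℝ)) (Ioi 1) :=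
      integrableOn_Ioi_rpow_of_lt (by norm_num) one_pos
    have h1 : IntegrableOn (fun x : ℝ => 4 * x ^ (-(3/2) : ℝ)) (Ioi 1) :=
      h0.const_mul 4
    apply h1.congr_fun _ measurableSet_Ioi
    intro x hx
    have hx0 : (0:ℝ) < x := lt_trans one_pos hx
    show 4 * x ^ (-(3/2) : ℝ) = 4 * (x * Real.sqrt x)⁻¹
    rw [Real.rpow_neg hx0.le, Real.sqrt_eq_rpow,
      show (3/2:ℝ) = 1 + 1/2 by norm_num, Real.rpow_add hx0, Real.rpow_one]
  apply Integrable.mono' hbint hmeas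
  rw [ae_restrict_iff' measurableSet_Ioi]
  apply Eventually.of_forall
  intro x hx
  have hx1 : (1:ℝ) ≤ x := le_of_lt hx
  calc ‖Gct' x * Real.sin x‖ = |Gct' x| * |Real.sin x| := abs_mul _ _
    _ ≤ |Gct' x| * 1 := by
        apply mul_le_mul_of_nonneg_left (Real.abs_sin_le_one x) (abs_nonneg _)
    _ = |Gct' x| := mul_one _
    _ ≤ 4 * (x * Real.sqrt x)⁻¹ := Gct'_bound hx1

lemma boundary_tendsto : Tendsto (fun T : ℝ => Gct T * Real.sin T) atTop (nhds 0) := by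
  have h1 : Tendsto (fun T : ℝ => (1/2 : ℝ) / T) atTop (nhds 0) :=
    tendsto_const_nhds.div_atTop tendsto_id
  have h2 : Tendsto (fun T : ℝ => Real.log T / T) atTop (nhds 0) := by
    have := Real.tendsto_pow_log_div_mul_add_atTop 1 0 1 one_ne_zero
    simpa using this
  have h3 : Tendsto (fun T : ℝ => (1/2 + Real.log T) / T) atTop (nhds 0) := by
    have := h1.add h2
    rw [add_zero] at this
    exact this.congr fun T => by rw [← add_div]
  apply squeeze_zero_norm' _ h3
  filter_upwards [eventually_ge_atTop (1:ℝ)] with T hT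
  have hT0 : (0:ℝ) < T := lt_of_lt_of_le one_pos hT
  have hG0 : 0 ≤ Gct T := div_nonneg (Fct_nonneg hT0.le) hT0.le
  calc ‖Gct T * Real.sin T‖ = |Gct T| * |Real.sin T| := abs_mul _ _
    _ ≤ |Gct T| * 1 := mul_le_mul_of_nonneg_left (Real.abs_sin_le_one T) (abs_nonneg _)
    _ = Gct T := by rw [mul_one, abs_of_nonneg hG0]
    _ ≤ (1/2 + Real.log T) / T := by
        unfold Gct
        exact div_le_div_of_nonneg_right (Fct_le_log hT) hT0.le |>.trans_eq rfl

lemma ibp {T : ℝ} (hT : 1 ≤ T) :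
    ∫ x in (1:ℝ)..T, Gct x * Real.cos x
      = Gct T * Real.sin T - Gct 1 * Real.sin 1
        - ∫ x in (1:ℝ)..T, Gct' x * Real.sin x := by
  have hsub : uIcc (1:ℝ) T ⊆ Ioi 0 := by
    rw [uIcc_of_le hT]
    intro x hx
    exact lt_of_lt_of_le one_pos hx.1
  apply intervalIntegral.integral_mul_deriv_eq_deriv_mul
  · intro x hx
    exact Gct_hasDeriv (hsub hx)
  · intro x hx
    exact Real.hasDerivAt_sin x
  · exact (Gct'_contOn.mono hsub).intervalIntegrable
  · exact Real.continuous_cos.intervalIntegrable 1 T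

lemma f_int01 : IntervalIntegrable (fun u : ℝ => Real.cos u / u * Fct u) volume 0 1 := by
  apply (intervalIntegrable_const (c := (1/2 : ℝ))).mono_fun
  · exact ((Real.measurable_cos.div measurable_id).mul Fct_cont.measurable).aestronglyMeasurable
  · filter_upwards [ae_restrict_mem measurableSet_uIoc] with u hu
    rw [uIoc_of_le zero_le_one] at hu
    have hu0 : (0:ℝ) < u := hu.1
    have hu1 : u ≤ 1 := hu.2
    have hF : Fct u ≤ u ^ 2 / 2 := Fct_le_sq hu0.le
    have hF0 : 0 ≤ Fct u := Fct_nonneg hu0.le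
    simp only [norm_eq_abs]
    rw [abs_of_nonneg (by norm_num : (0:ℝ) ≤ 1/2)]
    calc |Real.cos u / u * Fct u| = |Real.cos u| / u * Fct u := by
          rw [abs_mul, abs_div, abs_of_nonneg hu0.le, abs_of_nonneg hF0]
      _ ≤ 1 / u * Fct u := by
          apply mul_le_mul_of_nonneg_right _ hF0
          exact div_le_div_of_nonneg_right (Real.abs_cos_le_one u) hu0.le |>.trans_eq rfl
      _ ≤ 1 / u * (u ^ 2 / 2) := mul_le_mul_of_nonneg_left hF (by positivity)
      _ = u / 2 := by field_simp
      _ ≤ 1 / 2 := by linarith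

lemma f_int1T {T : ℝ} (hT : 1 ≤ T) :
    IntervalIntegrable (fun u : ℝ => Real.cos u / u * Fct u) volume 1 T := by
  apply ContinuousOn.intervalIntegrable
  have hsub : uIcc (1:ℝ) T ⊆ Ioi 0 := by
    rw [uIcc_of_le hT]
    intro x hx
    exact lt_of_lt_of_le one_pos hx.1
  apply ContinuousOn.mul _ Fct_cont.continuousOn
  exact Real.continuous_cos.continuousOn.div continuousOn_id
    fun x hx => (hsub hx).ne'

/-- The improper integral `∫₀^∞ (cos u / u)·(∫₀^u sin²v/v dv) du` converges:
the limit of `∫₀^T` as `T → ∞` exists and is finite. -/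
theorem converges_cos_term :
    ∃ L : ℝ,
      Tendsto
        (fun T : ℝ => ∫ u in (0:ℝ)..T,
          (Real.cos u / u) * ∫ v in (0:ℝ)..u, Real.sin v ^ 2 / v)
        atTop (nhds L) := by
  have hIntegrand : ∀ T : ℝ,
      (∫ u in (0:ℝ)..T, (Real.cos u / u) * ∫ v in (0:ℝ)..u, Real.sin v ^ 2 / v)
        = ∫ u in (0:ℝ)..T, Real.cos u / u * Fct u := fun T => rfl
  set C : ℝ := ∫ u in (0:ℝ)..1, Real.cos u / u * Fct u with hC
  set I : ℝ := ∫ x in Ioi (1:ℝ), Gct' x * Real.sin x with hI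
  refine ⟨C + (0 - Gct 1 * Real.sin 1 - I), ?_⟩
  have htail : Tendsto (fun T : ℝ => ∫ x in (1:ℝ)..T, Gct' x * Real.sin x)
      atTop (nhds I) :=
    intervalIntegral_tendsto_integral_Ioi 1 phi_integrableOn tendsto_id
  have hbig : Tendsto
      (fun T : ℝ => C + (Gct T * Real.sin T - Gct 1 * Real.sin 1
        - ∫ x in (1:ℝ)..T, Gct' x * Real.sin x))
      atTop (nhds (C + (0 - Gct 1 * Real.sin 1 - I))) :=
    tendsto_const_nhds.add (((boundary_tendsto.sub tendsto_const_nhds)).sub htail)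
  apply hbig.congr'
  filter_upwards [eventually_ge_atTop (1:ℝ)] with T hT
  rw [hIntegrand T]
  have hsplit : (∫ u in (0:ℝ)..1, Real.cos u / u * Fct u)
      + (∫ u in (1:ℝ)..T, Real.cos u / u * Fct u)
      = ∫ u in (0:ℝ)..T, Real.cos u / u * Fct u :=
    intervalIntegral.integral_add_adjacent_intervals f_int01 (f_int1T hT)
  have hcongr : (∫ u in (1:ℝ)..T, Real.cos u / u * Fct u)
      = ∫ u in (1:ℝ)..T, Gct u * Real.cos u := by
    apply intervalIntegral.integral_congr
    intro u _
    unfold Gct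
    ring
  rw [← hsplit, hcongr, ibp hT, ← hC]
end
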